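/- Every nilpotent subgroup of the alternating group Alt(5) has order at most 5, and hence its square is less than |Alt(5)| = 60. -/
import Mathlib

set_option maxRecDepth 20000 in
lemma alt5_pow_small : ∀ σ : Equiv.Perm (Fin 5), Equiv.Perm.sign σ = 1 →
    σ ^ 2 = 1 ∨ σ ^ 3 = 1 ∨ σ ^ 5 = 1 := by decide

lemma two_primes_of_div60 : ∀ n ∈ Nat.divisors 60, 6 ≤ n →
    ∃ p ∈ Finset.range 6, ∃ q ∈ Finset.range 6,
      Nat.Prime p ∧ Nat.Prime q ∧ p ≠ q ∧ p ∣ n ∧ q ∣ n := by decide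

theorem nilpotent_subgroup_of_alt5 (Y : Subgroup (Equiv.Perm (Fin 5)))
    (hYA : Y ≤ alternatingGroup (Fin 5)) (hY : Group.IsNilpotent Y) :
    Nat.card Y ≤ 5 ∧ Nat.card Y ^ 2 < 60 := by
  have hcardA : Nat.card (alternatingGroup (Fin 5)) = 60 := by
    have h := two_mul_card_alternatingGroup (α := Fin 5)
    rw [Fintype.card_perm, Fintype.card_fin] at h
    have h120 : Nat.factorial 5 = 120 := by decide
    rw [h120] at h
    rw [Nat.card_eq_fintype_card]
    omega
  have hdvd : Nat.card Y ∣ 60 := hcardA ▸ Subgroup.card_dvd_of_le hYA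
  suffices h5 : Nat.card Y ≤ 5 by
    refine ⟨h5, ?_⟩
    calc Nat.card Y ^ 2 ≤ 5 ^ 2 := Nat.pow_le_pow_left h5 2
    _ < 60 := by norm_num
  by_contra hlt
  push_neg at hlt
  obtain ⟨p, -, q, -, hpP, hqP, hpq, hpd, hqd⟩ := two_primes_of_div60 (Nat.card Y)
    (Nat.mem_divisors.mpr ⟨hdvd, by norm_num⟩) hlt
  haveI : Fact p.Prime := ⟨hpP⟩
  haveI : Fact q.Prime := ⟨hqP⟩
  have hnorm : ∀ (r : ℕ) (_ : Fact r.Prime) (P : Sylow r Y), (↑P : Subgroup Y).Normal :=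
    (isNilpotent_of_finite_tfae (G := Y)).out 0 3 |>.mp hY
  obtain ⟨P⟩ : Nonempty (Sylow p Y) := inferInstance
  obtain ⟨Q⟩ : Nonempty (Sylow q Y) := inferInstance
  have hpdP : p ∣ Nat.card (↥(P : Subgroup Y)) := by
    rw [Sylow.card_eq_multiplicity]
    exact dvd_pow_self p (Nat.Prime.factorization_pos_of_dvd hpP (Nat.card_pos.ne') hpd).ne'
  have hqdQ : q ∣ Nat.card (↥(Q : Subgroup Y)) := by
    rw [Sylow.card_eq_multiplicity]
    exact dvd_pow_self q (Nat.Prime.factorization_pos_of_dvd hqP (Nat.card_pos.ne') hqd).ne'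
  obtain ⟨x, hx⟩ := exists_prime_orderOf_dvd_card' p hpdP
  obtain ⟨y, hy⟩ := exists_prime_orderOf_dvd_card' q hqdQ
  set a : ↥Y := (x : ↥Y) with hadef
  set b : ↥Y := (y : ↥Y) with hbdef
  have ha : orderOf a = p := by rw [hadef, Subgroup.orderOf_coe, hx]
  have hb : orderOf b = q := by rw [hbdef, Subgroup.orderOf_coe, hy]
  have hcomm : Commute a b :=
    Subgroup.commute_of_normal_of_disjoint _ _ (hnorm p ‹_› P) (hnorm q ‹_› Q)
      (IsPGroup.disjoint_of_ne p q hpq _ _ P.isPGroup' Q.isPGroup') _ _ x.2 y.2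
  have hcop : Nat.Coprime (orderOf a) (orderOf b) := by
    rw [ha, hb]; exact (Nat.coprime_primes hpP hqP).mpr hpq
  have hord : orderOf (a * b) = p * q := by
    rw [Commute.orderOf_mul_eq_mul_orderOf_of_coprime hcomm hcop, ha, hb]
  set g : Equiv.Perm (Fin 5) := ((a * b : ↥Y) : Equiv.Perm (Fin 5)) with hg
  have hordg : orderOf g = p * q := by rw [hg, Subgroup.orderOf_coe, hord]
  have hgA : g ∈ alternatingGroup (Fin 5) := hYA (a * b).2
  have h6 : 6 ≤ p * q := by
    have h2p := hpP.two_le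
    have h2q := hqP.two_le
    rcases lt_or_gt_of_ne hpq with h | h
    · have : 3 ≤ q := by omega
      nlinarith
    · have : 3 ≤ p := by omega
      nlinarith
  have hdvdk : ∀ k : ℕ, g ^ k = 1 → p * q ∣ k := fun k hk => hordg ▸ orderOf_dvd_of_pow_eq_one hk
  rcases alt5_pow_small g (Equiv.Perm.mem_alternatingGroup.mp hgA) with h | h | h
  · have := Nat.le_of_dvd (by norm_num) (hdvdk 2 h); omega
  · have := Nat.le_of_dvd (by norm_num) (hdvdk 3 h); omega
  · have := Nat.le_of_dvd (by norm_num) (hdvdk 5 h); omega
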